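/- Let H(x,y) = y²/2 + x²/2 + x⁴/4. Then the 1-form y³ dx satisfies the relative decomposition y³ dx = (12/7·H − 3/7·x²)·y dx − (3/7)·x y dH + d((1/7)·x y³), i.e. the difference of the two sides is the zero 1-form on ℝ², where dH = H_x dx + H_y dy. -/

import Mathlib

/-- partial derivative in the first variable -/
noncomputable def pdx (F : ℝ → ℝ → ℝ) (x y : ℝ) : ℝ := deriv (fun t => F t y) x

/-- partial derivative in the second variable -/
noncomputable def pdy (F : ℝ → ℝ → ℝ) (x y : ℝ) : ℝ := deriv (fun t => F x t) y

/-- global center Hamiltonian -/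
noncomputable def H (x y : ℝ) : ℝ := y^2/2 + x^2/2 + x^4/4

/-- (i1):  y³dx = (12/7·H − 3/7·x²)·y dx − (3/7)·xy·dH + d((1/7)·xy³) -/
theorem decomposition_i1 : ∀ x y : ℝ,
    y^3 = (12/7 * H x y - 3/7 * x^2) * y - 3/7 * (x*y) * pdx H x y
      + pdx (fun x y => 1/7 * x * y^3) x y
  ∧ (0 : ℝ) = - (3/7) * (x*y) * pdy H x y + pdy (fun x y => 1/7 * x * y^3) x y := by
  intro x y
  have h1 : pdx H x y = x + x^3 := by
    unfold pdx H
    have h : HasDerivAt (fun t : ℝ => y^2/2 + t^2/2 + t^4/4) (x + x^3) x := by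
      have hc : HasDerivAt (fun t : ℝ => t^2/2 + t^4/4) (x + x^3) x := by
        have := ((hasDerivAt_pow 2 x).div_const 2).add ((hasDerivAt_pow 4 x).div_const 4)
        refine this.congr_deriv ?_
        push_cast
        ring
      have := hc.const_add (y^2/2)
      refine this.congr_of_eventuallyEq (Filter.Eventually.of_forall fun t => ?_)
      beta_reduce
      ring
    exact h.deriv
  have h2 : pdy H x y = y := by
    unfold pdy H
    simp
  have h3 : pdx (fun x y => 1/7 * x * y^3) x y = 1/7 * y^3 := by
    unfold pdx
    simp [mul_comm, mul_assoc]
  have h4 : pdy (fun x y => 1/7 * x * y^3) x y = 3/7 * x * y^2 := by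
    unfold pdy
    simp [deriv_const_mul]
    ring
  rw [h1, h2, h3, h4]
  unfold H
  constructor <;> ring
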